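/- Let A be a C*-algebra and H_A the standard Hilbert A-module of sequences {aₙ} in A with Σ a_k*a_k norm-convergent. Suppose ξ = {bₙ} ∈ H_A^♯ (i.e., sup_n ‖Σ_{k=1}^n b_k*b_k‖ < ∞ with each bₙ ∈ A) and there is a bounded net {x_α} in H_A such that ξ(x) = lim_α ⟨x_α, x⟩ in norm for all x ∈ H_A, and ξ(x_α) converges in norm. Then ξ ∈ H_A (i.e., Σ_k b_k*b_k converges in norm) and the limit of ξ(x_α) equals ⟨ξ, ξ⟩ = Σ_k b_k*b_k. -/

import Mathlib

open scoped ComplexOrder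
open Filter Topology

section HAHelpers

variable {A : Type*} [CStarAlgebra A] [PartialOrder A] [StarOrderedRing A]

private lemma HA.gram_nonneg (w : ℕ → A) (F : Finset ℕ) : 0 ≤ ∑ k ∈ F, star (w k) * w k :=
  Finset.sum_nonneg fun _ _ => star_mul_self_nonneg _

private lemma HA.norm_nsmul' (n : ℕ) (z : A) : ‖n • z‖ = n * ‖z‖ := by
  rw [← Nat.cast_smul_eq_nsmul ℂ, norm_smul]; simp

private lemma HA.expand (u v : ℕ → A) (F : Finset ℕ) (a : A) :
    ∑ k ∈ F, star (u k * a - v k) * (u k * a - v k) =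
      star a * (∑ k ∈ F, star (u k) * u k) * a - star a * (∑ k ∈ F, star (u k) * v k)
        - star (∑ k ∈ F, star (u k) * v k) * a + ∑ k ∈ F, star (v k) * v k := by
  rw [Finset.mul_sum, Finset.sum_mul, Finset.mul_sum, star_sum, Finset.sum_mul,
    ← Finset.sum_sub_distrib, ← Finset.sum_sub_distrib, ← Finset.sum_add_distrib]
  refine Finset.sum_congr rfl fun k _ => ?_
  simp only [star_sub, star_mul, star_star]
  noncomm_ring

/-- key positivity inequality -/
private lemma HA.key_pos (u v : ℕ → A) (F : Finset ℕ) :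
    (∑ k ∈ F, star (u k) * v k) + (∑ k ∈ F, star (v k) * u k) - (∑ k ∈ F, star (v k) * v k)
      ≤ ∑ k ∈ F, star (u k) * u k := by
  have h := HA.gram_nonneg (fun k => u k - v k) F
  have he : ∑ k ∈ F, star (u k - v k) * (u k - v k) =
      (∑ k ∈ F, star (u k) * u k) - (∑ k ∈ F, star (u k) * v k)
        - (∑ k ∈ F, star (v k) * u k) + (∑ k ∈ F, star (v k) * v k) := by
    rw [← Finset.sum_sub_distrib, ← Finset.sum_sub_distrib, ← Finset.sum_add_distrib]
    refine Finset.sum_congr rfl fun k _ => ?_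
    simp only [star_sub]
    noncomm_ring
  have he2 : (∑ k ∈ F, star (u k) * u k) - (∑ k ∈ F, star (u k) * v k)
        - (∑ k ∈ F, star (v k) * u k) + (∑ k ∈ F, star (v k) * v k)
      = (∑ k ∈ F, star (u k) * u k) -
        ((∑ k ∈ F, star (u k) * v k) + (∑ k ∈ F, star (v k) * u k)
          - (∑ k ∈ F, star (v k) * v k)) := by abel
  rw [he, he2] at h
  exact sub_nonneg.mp h

/-- Cauchy–Schwarz for finite sums in a C⋆-algebra -/
private lemma HA.cs (u v : ℕ → A) (F : Finset ℕ) :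
    ‖∑ k ∈ F, star (u k) * v k‖ ^ 2
      ≤ ‖∑ k ∈ F, star (u k) * u k‖ * ‖∑ k ∈ F, star (v k) * v k‖ := by
  set z := ∑ k ∈ F, star (u k) * v k with hz
  set U := ∑ k ∈ F, star (u k) * u k with hU
  set V := ∑ k ∈ F, star (v k) * v k with hV
  by_cases hU0 : U = 0
  · have hu : ∀ k ∈ F, star (u k) * u k = 0 :=
      (Finset.sum_eq_zero_iff_of_nonneg (fun k _ => star_mul_self_nonneg (u k))).mp (hU ▸ hU0)
    have hz0 : z = 0 := by
      rw [hz]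
      refine Finset.sum_eq_zero fun k hk => ?_
      have : u k = 0 := (CStarRing.star_mul_self_eq_zero_iff (u k)).mp (hu k hk)
      simp [this]
    rw [hz0]
    simp
    positivity
  · have hUpos : (0:ℝ) < ‖U‖ := norm_pos_iff.mpr hU0
    set t : ℝ := ‖U‖⁻¹ with ht
    have key : star z * z ≤ ‖U‖ • V := by
      have h := HA.gram_nonneg (fun k => u k * (t • z) - v k) F
      rw [HA.expand u v F (t • z)] at h
      have hsz : star (t • z) = t • star z := by
        rw [star_smul]; norm_num
      have hUsa : IsSelfAdjoint U := IsSelfAdjoint.of_nonneg (HA.gram_nonneg u F)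
      have hconj : star (t • z) * U * (t • z) ≤ ‖U‖ • (star (t • z) * (t • z)) :=
        CStarAlgebra.star_left_conjugate_le_norm_smul hUsa
      have e1 : star (t • z) * z = t • (star z * z) := by rw [hsz, smul_mul_assoc]
      have e2 : star z * (t • z) = t • (star z * z) := by rw [mul_smul_comm]
      have e3 : ‖U‖ • (star (t • z) * (t • z)) = t • (star z * z) := by
        rw [hsz, smul_mul_assoc, mul_smul_comm, smul_smul, smul_smul, ht]
        rw [mul_inv_cancel₀ (ne_of_gt hUpos), one_mul]
      rw [← hz, e1, e2] at h
      have h1 : t • (star z * z) + t • (star z * z) - V ≤ star (t • z) * U * (t • z) := by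
        have he : star (t • z) * U * (t • z) - t • (star z * z) - t • (star z * z) + V
            = star (t • z) * U * (t • z) -
              (t • (star z * z) + t • (star z * z) - V) := by abel
        rw [he] at h
        exact sub_nonneg.mp h
      have h2 : t • (star z * z) + t • (star z * z) - V ≤ t • (star z * z) :=
        h1.trans (hconj.trans_eq e3)
      rw [sub_le_iff_le_add] at h2
      have h3 : t • (star z * z) ≤ V := le_of_add_le_add_left h2
      have h4 := smul_le_smul_of_nonneg_left h3 (le_of_lt hUpos)
      rwa [smul_smul, mul_inv_cancel₀ (ne_of_gt hUpos), one_smul] at h4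
    calc ‖z‖ ^ 2 = ‖star z * z‖ := by rw [CStarRing.norm_star_mul_self]; ring
    _ ≤ ‖(‖U‖ : ℝ) • V‖ := CStarAlgebra.norm_le_norm_of_nonneg_of_le (star_mul_self_nonneg z) key
    _ = ‖U‖ * ‖V‖ := by rw [norm_smul]; simp

private lemma HA.summable_pair (u v : ℕ → A) (Cu : ℝ)
    (hu : ∀ n, ‖∑ k ∈ Finset.range n, star (u k) * u k‖ ≤ Cu)
    (hv : ∃ s : A, Tendsto (fun n => ∑ k ∈ Finset.range n, star (v k) * v k) atTop (𝓝 s)) :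
    Summable fun k => star (u k) * v k := by
  have hCu0 : 0 ≤ Cu := by simpa using hu 0
  rw [summable_iff_vanishing]
  intro e he
  obtain ⟨ε, hε, hball⟩ := Metric.mem_nhds_iff.mp he
  obtain ⟨s, hs⟩ := hv
  have hcauchy : CauchySeq fun n => ∑ k ∈ Finset.range n, star (v k) * v k := hs.cauchySeq
  set δ : ℝ := (ε / 2) ^ 2 / (Cu + 1) with hδdef
  have hδ : 0 < δ := by positivity
  obtain ⟨N, hN⟩ := Metric.cauchySeq_iff'.mp hcauchy δ hδ
  refine ⟨Finset.range N, fun t ht => ?_⟩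
  apply hball
  rw [Metric.mem_ball, dist_zero_right]
  set M : ℕ := N + (t.sup id) + 1 with hM
  have htM : t ⊆ Finset.range M \ Finset.range N := by
    intro k hk
    rw [Finset.mem_sdiff, Finset.mem_range, Finset.mem_range]
    constructor
    · have : k ≤ t.sup id := Finset.le_sup (f := id) hk
      omega
    · intro hkN
      exact (Finset.disjoint_left.mp ht) hk (Finset.mem_range.mpr hkN)
  have hNM : Finset.range N ⊆ Finset.range M := by
    apply Finset.range_subset_range.mpr; omega
  have h1 : ‖∑ k ∈ t, star (u k) * u k‖ ≤ Cu := by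
    refine le_trans (CStarAlgebra.norm_le_norm_of_nonneg_of_le (HA.gram_nonneg u t) ?_) (hu M)
    exact Finset.sum_le_sum_of_subset_of_nonneg (htM.trans (Finset.sdiff_subset))
      fun k _ _ => star_mul_self_nonneg _
  have h2 : ‖∑ k ∈ t, star (v k) * v k‖ ≤ δ := by
    have hle : ∑ k ∈ t, star (v k) * v k ≤
        (∑ k ∈ Finset.range M, star (v k) * v k) - ∑ k ∈ Finset.range N, star (v k) * v k := by
      rw [← Finset.sum_sdiff_eq_sub hNM]
      exact Finset.sum_le_sum_of_subset_of_nonneg htM fun k _ _ => star_mul_self_nonneg _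
    refine le_trans (CStarAlgebra.norm_le_norm_of_nonneg_of_le (HA.gram_nonneg v t) hle) ?_
    have := hN M (by omega)
    rw [dist_eq_norm] at this
    exact le_of_lt this
  have h3 := HA.cs u v t
  have h4 : ‖∑ k ∈ t, star (u k) * v k‖ ^ 2 ≤ (ε / 2) ^ 2 := by
    calc ‖∑ k ∈ t, star (u k) * v k‖ ^ 2
        ≤ ‖∑ k ∈ t, star (u k) * u k‖ * ‖∑ k ∈ t, star (v k) * v k‖ := h3
      _ ≤ Cu * δ := mul_le_mul h1 h2 (norm_nonneg _) hCu0
      _ ≤ (Cu + 1) * δ := by nlinarith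
      _ = (ε / 2) ^ 2 := by rw [hδdef]; field_simp
  nlinarith [norm_nonneg (∑ k ∈ t, star (u k) * v k)]

private lemma HA.chain {ι : Type*} (l : Filter ι) [l.NeBot] (U : Set ι) (hU : U ∈ l)
    (K : ι → Set ι) (hK : ∀ j, K j ∈ l) (m : ℕ) :
    ∃ v : Fin m → ι, (∀ r, v r ∈ U) ∧ ∀ r s : Fin m, r < s → v s ∈ K (v r) := by
  induction m with
  | zero => exact ⟨fun r => r.elim0, fun r => r.elim0, fun r => r.elim0⟩
  | succ m ih =>
    obtain ⟨v, hvU, hvK⟩ := ih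
    have hmem : (U ∩ ⋂ r : Fin m, K (v r)) ∈ l :=
      Filter.inter_mem hU ((Filter.iInter_mem).mpr fun r => hK (v r))
    obtain ⟨j, hjU, hjK⟩ := Filter.nonempty_of_mem hmem
    rw [Set.mem_iInter] at hjK
    refine ⟨Fin.snoc v j, ?_, ?_⟩
    · intro r
      induction r using Fin.lastCases with
      | last => simpa using hjU
      | cast r => simpa using hvU r
    · intro r s hrs
      induction s using Fin.lastCases with
      | last =>
        have hr : r ≠ Fin.last m := ne_of_lt hrs
        obtain ⟨r', hr'⟩ := Fin.exists_castSucc_eq.mpr hr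
        subst hr'
        simpa using hjK r'
      | cast s' =>
        have hr : r ≠ Fin.last m :=
          ne_of_lt (lt_of_lt_of_le hrs (Fin.castSucc_lt_last s').le)
        obtain ⟨r', hr'⟩ := Fin.exists_castSucc_eq.mpr hr
        subst hr'
        have : r' < s' := by
          rwa [Fin.castSucc_lt_castSucc_iff] at hrs
        simpa using hvK r' s' this

private lemma HA.swap_sum {m : ℕ} {M : Type*} [AddCommMonoid M] (f : Fin m × Fin m → M) :
    ∑ p ∈ (Finset.univ : Finset (Fin m)).offDiag.filter (fun p => ¬ p.2 < p.1), f p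
      = ∑ p ∈ (Finset.univ : Finset (Fin m)).offDiag.filter (fun p => p.2 < p.1), f p.swap := by
  refine Finset.sum_nbij' (fun p => p.swap) (fun p => p.swap) ?_ ?_ ?_ ?_ ?_
  · intro p hp
    rw [Finset.mem_filter, Finset.mem_offDiag] at hp
    rw [Finset.mem_filter, Finset.mem_offDiag]
    refine ⟨⟨Finset.mem_univ _, Finset.mem_univ _, ?_⟩, ?_⟩
    · simp only [Prod.fst_swap, Prod.snd_swap]
      exact Ne.symm hp.1.2.2
    · simp only [Prod.fst_swap, Prod.snd_swap]
      exact lt_of_le_of_ne (not_lt.mp hp.2) hp.1.2.2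
  · intro p hp
    rw [Finset.mem_filter, Finset.mem_offDiag] at hp
    rw [Finset.mem_filter, Finset.mem_offDiag]
    refine ⟨⟨Finset.mem_univ _, Finset.mem_univ _, ?_⟩, ?_⟩
    · simp only [Prod.fst_swap, Prod.snd_swap]
      exact Ne.symm hp.1.2.2
    · simp only [Prod.fst_swap, Prod.snd_swap]
      exact not_lt_of_gt hp.2
  · intro p _; simp
  · intro p _; simp
  · intro p _; simp

/-- Gram off-diagonal estimate for a chain. -/
private lemma HA.gram_pack {ι : Type*} (c : A) (Φ : ι → A) (g : ι → ι → A)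
    (hgstar : ∀ i j, star (g i j) = g j i) (m : ℕ) (ε : ℝ) (hε : 0 ≤ ε) (v : Fin m → ι)
    (hvI : ∀ r, ‖Φ (v r) - c‖ ≤ ε) (hvJ : ∀ r s : Fin m, r < s → ‖g (v s) (v r) - Φ (v r)‖ ≤ ε) :
    ‖∑ p ∈ (Finset.univ : Finset (Fin m)).offDiag,
        ((2:ℕ) • g (v p.1) (v p.2) - (c + star c))‖ ≤ (m*m) * (8*ε) := by
  classical
  let h : Fin m × Fin m → A := fun p => (2:ℕ) • g (v p.1) (v p.2) - (c + star c)
  let P := (Finset.univ : Finset (Fin m)).offDiag.filter (fun p => p.2 < p.1)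
  have hsplit : ∑ p ∈ (Finset.univ : Finset (Fin m)).offDiag, h p
      = ∑ p ∈ P, h p + ∑ p ∈ (Finset.univ : Finset (Fin m)).offDiag.filter
          (fun p => ¬ p.2 < p.1), h p :=
    (Finset.sum_filter_add_sum_filter_not _ _ _).symm
  have hswap : ∑ p ∈ (Finset.univ : Finset (Fin m)).offDiag.filter (fun p => ¬ p.2 < p.1), h p
      = ∑ p ∈ P, h p.swap := HA.swap_sum h
  have hpair : ∀ p ∈ P, ‖h p + h p.swap‖ ≤ 8 * ε := by
    intro p hp
    rw [Finset.mem_filter, Finset.mem_offDiag] at hp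
    obtain ⟨⟨-, -, hne⟩, hlt⟩ := hp
    have hgc : ‖g (v p.1) (v p.2) - c‖ ≤ 2 * ε := by
      have h1 := hvJ p.2 p.1 hlt
      have h2 := hvI p.2
      calc ‖g (v p.1) (v p.2) - c‖
          = ‖(g (v p.1) (v p.2) - Φ (v p.2)) + (Φ (v p.2) - c)‖ := by rw [sub_add_sub_cancel]
        _ ≤ ‖g (v p.1) (v p.2) - Φ (v p.2)‖ + ‖Φ (v p.2) - c‖ := norm_add_le _ _
        _ ≤ 2 * ε := by linarith
    have hid : h p + h p.swap
        = (2:ℕ) • (g (v p.1) (v p.2) - c) + (2:ℕ) • (star (g (v p.1) (v p.2)) - star c) := by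
      show (2:ℕ) • g (v p.1) (v p.2) - (c + star c)
          + ((2:ℕ) • g (v p.swap.1) (v p.swap.2) - (c + star c)) = _
      simp only [Prod.fst_swap, Prod.snd_swap]
      rw [← hgstar (v p.1) (v p.2)]
      abel
    rw [hid]
    calc ‖(2:ℕ) • (g (v p.1) (v p.2) - c) + (2:ℕ) • (star (g (v p.1) (v p.2)) - star c)‖
        ≤ ‖(2:ℕ) • (g (v p.1) (v p.2) - c)‖ + ‖(2:ℕ) • (star (g (v p.1) (v p.2)) - star c)‖ :=
          norm_add_le _ _
      _ = 2 * ‖g (v p.1) (v p.2) - c‖ + 2 * ‖star (g (v p.1) (v p.2) - c)‖ := by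
          rw [HA.norm_nsmul', HA.norm_nsmul', star_sub]; norm_num
      _ = 4 * ‖g (v p.1) (v p.2) - c‖ := by rw [norm_star]; ring
      _ ≤ 8 * ε := by linarith
  have hcard : P.card ≤ m * m := by
    calc P.card ≤ ((Finset.univ : Finset (Fin m)).offDiag).card := Finset.card_filter_le _ _
      _ = m * m - m := by rw [Finset.offDiag_card]; simp
      _ ≤ m * m := Nat.sub_le _ _
  calc ‖∑ p ∈ (Finset.univ : Finset (Fin m)).offDiag, h p‖
      = ‖∑ p ∈ P, (h p + h p.swap)‖ := by rw [hsplit, hswap, Finset.sum_add_distrib]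
    _ ≤ ∑ p ∈ P, ‖h p + h p.swap‖ := norm_sum_le _ _
    _ ≤ ∑ _p ∈ P, (8*ε) := Finset.sum_le_sum hpair
    _ = P.card * (8*ε) := by rw [Finset.sum_const, nsmul_eq_mul]
    _ ≤ (m*m) * (8*ε) := by
        have : (P.card : ℝ) ≤ (m*m : ℕ) := by exact_mod_cast hcard
        push_cast at this ⊢
        nlinarith

private lemma HA.tendsto_nsmul {X : Type*} {l' : Filter X} (q : ℕ) {f : X → A} {a : A}
    (h : Tendsto f l' (𝓝 a)) : Tendsto (fun t => q • f t) l' (𝓝 (q • a)) := by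
  have := h.const_smul ((q : ℂ))
  simpa [Nat.cast_smul_eq_nsmul] using this

private lemma HA.sum_norm_le_card {m : ℕ} (f : Fin m → A) (bd : ℝ) (h : ∀ r, ‖f r‖ ≤ bd) :
    ‖∑ r, f r‖ ≤ m * bd := by
  calc ‖∑ r, f r‖ ≤ ∑ r, ‖f r‖ := norm_sum_le _ _
    _ ≤ ∑ _r : Fin m, bd := Finset.sum_le_sum fun r _ => h r
    _ = m * bd := by rw [Finset.sum_const, Finset.card_univ, Fintype.card_fin, nsmul_eq_mul]

private lemma HA.offsplit {m : ℕ} {M : Type*} [AddCommMonoid M] (f : Fin m × Fin m → M) :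
    ∑ p ∈ (Finset.univ ×ˢ Finset.univ : Finset (Fin m × Fin m)), f p
      = (∑ r, f (r, r)) + ∑ p ∈ (Finset.univ : Finset (Fin m)).offDiag, f p := by
  rw [show (Finset.univ ×ˢ Finset.univ : Finset (Fin m × Fin m))
      = (Finset.univ : Finset (Fin m)).diag ∪ (Finset.univ : Finset (Fin m)).offDiag from
      (Finset.diag_union_offDiag _).symm,
    Finset.sum_union (Finset.disjoint_diag_offDiag _), Finset.sum_diag]

private lemma HA.double_smul_off {m : ℕ} (hm : 1 ≤ m) (T : A) (w : Fin m × Fin m → A) :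
    (2:ℕ) • (∑ p ∈ (Finset.univ : Finset (Fin m)).offDiag, w p)
      = (∑ p ∈ (Finset.univ : Finset (Fin m)).offDiag, ((2:ℕ) • w p - T))
        + ((m*m) • T - m • T) := by
  have hmm : m ≤ m * m := Nat.le_mul_of_pos_left m hm
  have hsub : (m*m - m) • T = (m*m) • T - m • T := by
    rw [sub_nsmul T hmm, sub_eq_add_neg]
  rw [Finset.sum_sub_distrib, Finset.sum_const]
  have hcard : ((Finset.univ : Finset (Fin m)).offDiag).card = m * m - m := by
    rw [Finset.offDiag_card]; simp
  rw [hcard, hsub, Finset.smul_sum]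
  abel

private lemma HA.qy {ι : Type*} (x : ι → ℕ → A) (g : ι → ι → A)
    (hglim : ∀ i j, Tendsto (fun M => ∑ k ∈ Finset.range M, star (x i k) * x j k)
      atTop (𝓝 (g i j)))
    (m : ℕ) (v : Fin m → ι) :
    Tendsto (fun M => ∑ k ∈ Finset.range M, star (∑ r, x (v r) k) * (∑ r, x (v r) k)) atTop
      (𝓝 (∑ p ∈ (Finset.univ ×ˢ Finset.univ : Finset (Fin m × Fin m)), g (v p.1) (v p.2))) := by
  have hrw : ∀ M, ∑ k ∈ Finset.range M, star (∑ r, x (v r) k) * (∑ r, x (v r) k)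
      = ∑ p ∈ (Finset.univ ×ˢ Finset.univ : Finset (Fin m × Fin m)),
          ∑ k ∈ Finset.range M, star (x (v p.1) k) * x (v p.2) k := by
    intro M
    have e : ∀ k, star (∑ r, x (v r) k) * (∑ r, x (v r) k)
        = ∑ p ∈ (Finset.univ ×ˢ Finset.univ : Finset (Fin m × Fin m)),
            star (x (v p.1) k) * x (v p.2) k := by
      intro k
      rw [star_sum, Finset.sum_mul_sum]
      exact (Finset.sum_product' (s := Finset.univ) (t := Finset.univ)
        (f := fun r s => star (x (v r) k) * x (v s) k)).symm
    rw [Finset.sum_congr rfl (fun k _ => e k), Finset.sum_comm]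
  exact Tendsto.congr (fun M => (hrw M).symm)
    (tendsto_finset_sum _ fun p _ => hglim (v p.1) (v p.2))

end HAHelpers

set_option maxHeartbeats 2000000 in
/-- closedness of `H_A` in `H_A^♯`.  An element `ξ = {bₙ}` of `H_A^♯`
(a sequence in `A` with norm-bounded partial sums of `Σ bₖ*bₖ`, acting on `H_A` by
`ξ(y) = Σₖ bₖ* yₖ`) which is approximated by a bounded net `{x_α} ⊆ H_A` in the sense that
`⟨x_α, y⟩ → ξ(y)` in norm for every `y ∈ H_A`, and such that `ξ(x_α)` converges in norm,
actually lies in `H_A` (the partial sums of `Σ bₖ*bₖ` converge in norm) and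
`lim_α ξ(x_α) = ⟨ξ, ξ⟩ = Σₖ bₖ*bₖ`. -/
theorem mem_HA_of_weak_approx
    {A ι : Type*} [CStarAlgebra A] [PartialOrder A] [StarOrderedRing A]
    (l : Filter ι) [l.NeBot]
    (b : ℕ → A)
    (hb : ∃ C : ℝ, ∀ n, ‖∑ k ∈ Finset.range n, star (b k) * b k‖ ≤ C)
    (x : ι → ℕ → A)
    (hxmem : ∀ i, ∃ s : A,
      Tendsto (fun n => ∑ k ∈ Finset.range n, star (x i k) * x i k) atTop (𝓝 s))
    (hxbd : ∃ C : ℝ, ∀ i n, ‖∑ k ∈ Finset.range n, star (x i k) * x i k‖ ≤ C)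
    (hlim : ∀ y : ℕ → A,
      (∃ s : A, Tendsto (fun n => ∑ k ∈ Finset.range n, star (y k) * y k) atTop (𝓝 s)) →
      Tendsto (fun i => ∑' k, star (x i k) * y k) l (𝓝 (∑' k, star (b k) * y k)))
    (hconv : ∃ c : A, Tendsto (fun i => ∑' k, star (b k) * x i k) l (𝓝 c)) :
    (∃ s : A, Tendsto (fun n => ∑ k ∈ Finset.range n, star (b k) * b k) atTop (𝓝 s)) ∧
    Tendsto (fun i => ∑' k, star (b k) * x i k) l (𝓝 (∑' k, star (b k) * b k)) := by
  classical
  obtain ⟨C, hC⟩ := hxbd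
  obtain ⟨B, hB⟩ := hb
  have main : ∃ s : A, Tendsto (fun n => ∑ k ∈ Finset.range n, star (b k) * b k) atTop (𝓝 s) := by
    obtain ⟨c, hc⟩ := hconv
    have hB0 : (0:ℝ) ≤ B := by simpa using hB 0
    have hιne : Nonempty ι := nonempty_of_neBot l
    obtain ⟨i0⟩ := hιne
    have hC0 : (0:ℝ) ≤ C := by simpa using hC i0 0
    -- notation
    set S : ℕ → A := fun n => ∑ k ∈ Finset.range n, star (b k) * b k with hSdef
    set Φ : ι → A := fun j => ∑' k, star (b k) * x j k with hΦdef
    set g : ι → ι → A := fun i j => ∑' k, star (x i k) * x j k with hgdef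
    set T : A := c + star c with hTdef
    set An : ι → ℕ → A := fun i n => ∑ k ∈ Finset.range n, star (x i k) * b k with hAdef
    have hcΦ : Tendsto Φ l (𝓝 c) := hc
    have hsum_bx : ∀ j, Summable fun k => star (b k) * x j k :=
      fun j => HA.summable_pair b (x j) B hB (hxmem j)
    have hsum_xx : ∀ i j, Summable fun k => star (x i k) * x j k :=
      fun i j => HA.summable_pair (x i) (x j) C (hC i) (hxmem j)
    have hΦlim : ∀ j, Tendsto (fun n => ∑ k ∈ Finset.range n, star (b k) * x j k)
        atTop (𝓝 (Φ j)) := fun j => (hsum_bx j).hasSum.tendsto_sum_nat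
    have hglim : ∀ i j, Tendsto (fun n => ∑ k ∈ Finset.range n, star (x i k) * x j k)
        atTop (𝓝 (g i j)) := fun i j => (hsum_xx i j).hasSum.tendsto_sum_nat
    have hgstar : ∀ i j, star (g i j) = g j i := by
      intro i j
      rw [hgdef]
      simp only
      rw [tsum_star]
      exact tsum_congr fun k => by simp [star_mul]
    have hgl : ∀ j, Tendsto (fun i => g i j) l (𝓝 (Φ j)) := fun j => hlim (x j) (hxmem j)
    have hgnorm : ∀ j, ‖g j j‖ ≤ C :=
      fun j => le_of_tendsto (hglim j j).norm (Eventually.of_forall fun n => hC j n)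
    have hSsa : ∀ n, star (S n) = S n := by
      intro n
      rw [hSdef]
      simp only
      rw [star_sum]
      exact Finset.sum_congr rfl fun k _ => by simp [star_mul]
    -- An i n → S n along l
    have hAn_tendsto : ∀ n, Tendsto (fun i => An i n) l (𝓝 (S n)) := by
      intro n
      set Pb : ℕ → A := fun k => if k < n then b k else 0 with hPbdef
      have hPbsum : ∀ M, n ≤ M → ∑ k ∈ Finset.range M, star (Pb k) * Pb k = S n := by
        intro M hM
        rw [hSdef]
        simp only
        rw [← Finset.sum_subset (Finset.range_subset_range.mpr hM) (fun k _ hk => ?_)]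
        · exact Finset.sum_congr rfl fun k hk => by
            rw [hPbdef]; simp only; rw [if_pos (Finset.mem_range.mp hk)]
        · have : ¬ k < n := by simpa [Finset.mem_range] using hk
          rw [hPbdef]; simp [this]
      have hymem : ∃ s : A, Tendsto (fun M => ∑ k ∈ Finset.range M, star (Pb k) * Pb k)
          atTop (𝓝 s) := by
        refine ⟨S n, Tendsto.congr' ?_ tendsto_const_nhds⟩
        filter_upwards [eventually_ge_atTop n] with M hM
        exact (hPbsum M hM).symm
      have h := hlim Pb hymem
      have hts : ∀ w : ℕ → A, ∑' k, star (w k) * Pb k = ∑ k ∈ Finset.range n, star (w k) * b k := by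
        intro w
        rw [tsum_eq_sum (s := Finset.range n) (fun k hk => ?_)]
        · exact Finset.sum_congr rfl fun k hk => by
            rw [hPbdef]; simp only; rw [if_pos (Finset.mem_range.mp hk)]
        · have : ¬ k < n := by simpa [Finset.mem_range] using hk
          rw [hPbdef]; simp [this]
      have h' := h.congr (fun i => hts (x i))
      rw [hts b] at h'
      exact h'
    clear_value S Φ g T An
    -- the key quantitative estimate
    have key : ∀ ε₀ : ℝ, 0 < ε₀ → ∃ N : ℕ, ∀ n ≥ N, ‖(2:ℕ) • S n - T‖ ≤ (9/10) * ε₀ := by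
      intro ε₀ hε₀
      set K : ℝ := ‖T‖ + 2*C with hKdef
      have hK0 : 0 ≤ K := by positivity
      obtain ⟨m0, hm0⟩ := exists_nat_ge (6*K/ε₀)
      set m : ℕ := m0 + 1 with hmdef
      have hm1 : 1 ≤ m := Nat.le_add_left 1 m0
      have hm1R : (1:ℝ) ≤ (m:ℝ) := by exact_mod_cast hm1
      have hmR : 6*K ≤ (m:ℝ) * ε₀ := by
        have h1 : (6*K/ε₀) ≤ (m:ℝ) := by
          refine hm0.trans ?_
          have : (m0:ℝ) ≤ (m0:ℝ) + 1 := by linarith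
          simpa [hmdef] using this
        calc 6*K = (6*K/ε₀)*ε₀ := by field_simp
          _ ≤ (m:ℝ) * ε₀ := by nlinarith
      set ε : ℝ := ε₀/100 with hεdef
      have hε : 0 < ε := by positivity
      clear_value K m ε
      -- eventually-sets
      have hIev : ∀ᶠ i in l, ‖Φ i - c‖ ≤ ε := by
        have h := Metric.tendsto_nhds.mp hcΦ ε hε
        filter_upwards [h] with i hi
        rw [dist_eq_norm] at hi; exact hi.le
      have hJev : ∀ j, ∀ᶠ i in l, ‖g i j - Φ j‖ ≤ ε := by
        intro j
        have h := Metric.tendsto_nhds.mp (hgl j) ε hε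
        filter_upwards [h] with i hi; rw [dist_eq_norm] at hi; exact hi.le
      have hGev : ∀ n, ∀ᶠ i in l, ‖An i n - S n‖ ≤ ε := by
        intro n
        have h := Metric.tendsto_nhds.mp (hAn_tendsto n) ε hε
        filter_upwards [h] with i hi; rw [dist_eq_norm] at hi; exact hi.le
      -- bound for `2•GY - m²•T` for any good chain
      have hGYb : ∀ v : Fin m → ι, (∀ r, ‖Φ (v r) - c‖ ≤ ε) →
          (∀ r s : Fin m, r < s → ‖g (v s) (v r) - Φ (v r)‖ ≤ ε) →
          ‖(2:ℕ) • (∑ p ∈ (Finset.univ ×ˢ Finset.univ : Finset (Fin m × Fin m)),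
              g (v p.1) (v p.2)) - (m*m) • T‖ ≤ (m:ℝ) * K + 8*((m:ℝ)*(m:ℝ))*ε := by
        intro v hvI hvJ
        have hEoff' := HA.gram_pack c Φ g hgstar m ε hε.le v hvI hvJ
        rw [← hTdef] at hEoff'
        have hEoff : ‖∑ p ∈ (Finset.univ : Finset (Fin m)).offDiag,
            ((2:ℕ) • g (v p.1) (v p.2) - T)‖ ≤ ((m:ℝ)*(m:ℝ)) * (8*ε) := by
          refine le_trans hEoff' (le_of_eq ?_)
          push_cast
          ring
        have hDg : ‖∑ r, g (v r) (v r)‖ ≤ (m:ℝ) * C :=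
          HA.sum_norm_le_card _ C (fun r => hgnorm (v r))
        have hid : (2:ℕ) • (∑ p ∈ (Finset.univ ×ˢ Finset.univ : Finset (Fin m × Fin m)),
              g (v p.1) (v p.2)) - (m*m) • T
            = ((2:ℕ) • (∑ r, g (v r) (v r))
              + (∑ p ∈ (Finset.univ : Finset (Fin m)).offDiag,
                  ((2:ℕ) • g (v p.1) (v p.2) - T))) - m • T := by
          rw [HA.offsplit, smul_add, HA.double_smul_off hm1 T]
          abel
        rw [hid]
        have h1 : ‖(2:ℕ) • (∑ r, g (v r) (v r))‖ ≤ 2*((m:ℝ)*C) := by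
          rw [HA.norm_nsmul']
          push_cast
          nlinarith [hDg]
        have h2 : ‖(m:ℕ) • T‖ = (m:ℝ) * ‖T‖ := HA.norm_nsmul' m T
        have h3 := norm_sub_le ((2:ℕ) • (∑ r, g (v r) (v r))
              + (∑ p ∈ (Finset.univ : Finset (Fin m)).offDiag,
                  ((2:ℕ) • g (v p.1) (v p.2) - T))) ((m:ℕ) • T)
        have h4 := norm_add_le ((2:ℕ) • (∑ r, g (v r) (v r)))
                  (∑ p ∈ (Finset.univ : Finset (Fin m)).offDiag,
                    ((2:ℕ) • g (v p.1) (v p.2) - T))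
        rw [h2] at h3
        have h5 : ‖((2:ℕ) • (∑ r, g (v r) (v r))
              + (∑ p ∈ (Finset.univ : Finset (Fin m)).offDiag,
                  ((2:ℕ) • g (v p.1) (v p.2) - T))) - (m:ℕ) • T‖
            ≤ 2*((m:ℝ)*C) + ((m:ℝ)*(m:ℝ)) * (8*ε) + (m:ℝ) * ‖T‖ := by linarith
        refine h5.trans (le_of_eq ?_)
        rw [hKdef]
        ring
      -- MI-1 : fixed chain
      obtain ⟨v1, hv1I, hv1J⟩ := HA.chain l {i | ‖Φ i - c‖ ≤ ε} hIev
        (fun j => {i | ‖g i j - Φ j‖ ≤ ε}) hJev m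
      set Y1 : ℕ → A := fun k => ∑ r, x (v1 r) k with hY1def
      set GY1 : A := ∑ p ∈ (Finset.univ ×ˢ Finset.univ : Finset (Fin m × Fin m)),
        g (v1 p.1) (v1 p.2) with hGY1def
      set F1 : A := ∑ r, Φ (v1 r) with hF1def
      set Bn : ℕ → A := fun n => ∑ k ∈ Finset.range n, star (b k) * Y1 k with hBndef
      set R1 : ℕ → A := fun n => (m*m) • T - (2*m) • (Bn n) - (2*m) • (star (Bn n))
        + (2:ℕ) • (∑ k ∈ Finset.range n, star (Y1 k) * Y1 k) with hR1def
      set R1inf : A := (m*m) • T - (2*m) • F1 - (2*m) • (star F1) + (2:ℕ) • GY1 with hR1infdef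
      clear_value Y1 GY1 F1 Bn R1 R1inf
      have hIneq1 : ∀ n, (m*m) • T - (2:ℕ) • ((m*m) • S n) ≤ R1 n := by
        intro n
        have h := HA.key_pos (fun k => m • (b k)) Y1 (Finset.range n)
        have e1 : ∑ k ∈ Finset.range n, star (m • b k) * Y1 k = m • Bn n := by
          simp only [hBndef]
          rw [Finset.smul_sum]
          exact Finset.sum_congr rfl fun k _ => by rw [star_nsmul, smul_mul_assoc]
        have e2 : ∑ k ∈ Finset.range n, star (Y1 k) * (m • b k) = m • star (Bn n) := by
          have hstar : star (Bn n) = ∑ k ∈ Finset.range n, star (Y1 k) * b k := by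
            simp only [hBndef]
            rw [star_sum]
            exact Finset.sum_congr rfl fun k _ => by simp [star_mul]
          rw [hstar, Finset.smul_sum]
          exact Finset.sum_congr rfl fun k _ => by rw [mul_smul_comm]
        have e3 : ∑ k ∈ Finset.range n, star (m • b k) * (m • b k) = (m*m) • S n := by
          simp only [hSdef]
          rw [Finset.smul_sum]
          exact Finset.sum_congr rfl fun k _ => by
            rw [star_nsmul, smul_mul_assoc, mul_smul_comm, smul_smul]
        rw [e1, e2, e3] at h
        have h2 := nsmul_le_nsmul_right h 2
        have h3 := sub_le_sub_left h2 ((m*m) • T)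
        refine h3.trans_eq ?_
        simp only [hR1def]
        module
      have hR1lim : Tendsto R1 atTop (𝓝 R1inf) := by
        have hBnlim : Tendsto Bn atTop (𝓝 F1) := by
          have hrw : ∀ n, Bn n = ∑ r, ∑ k ∈ Finset.range n, star (b k) * x (v1 r) k := by
            intro n
            simp only [hBndef, hY1def]
            have e : ∀ k, star (b k) * (∑ r, x (v1 r) k) = ∑ r, star (b k) * x (v1 r) k :=
              fun k => Finset.mul_sum _ _ _
            rw [Finset.sum_congr rfl fun k _ => e k, Finset.sum_comm]
          have hs := tendsto_finset_sum (Finset.univ : Finset (Fin m))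
            (fun r (_ : r ∈ Finset.univ) => hΦlim (v1 r))
          have hs2 := Tendsto.congr (fun n => (hrw n).symm) hs
          rw [← hF1def] at hs2
          exact hs2
        have hQlim1 : Tendsto (fun n => ∑ k ∈ Finset.range n, star (Y1 k) * Y1 k)
            atTop (𝓝 GY1) := by
          have hq := HA.qy x g hglim m v1
          rw [← hGY1def] at hq
          refine hq.congr fun M => ?_
          simp only [hY1def]
        have h1 : Tendsto (fun n => (2*m) • Bn n) atTop (𝓝 ((2*m) • F1)) :=
          HA.tendsto_nsmul _ hBnlim
        have h2 : Tendsto (fun n => (2*m) • star (Bn n)) atTop (𝓝 ((2*m) • star F1)) :=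
          HA.tendsto_nsmul _ hBnlim.star
        have h3 : Tendsto (fun n => (2:ℕ) • (∑ k ∈ Finset.range n, star (Y1 k) * Y1 k))
            atTop (𝓝 ((2:ℕ) • GY1)) := HA.tendsto_nsmul _ hQlim1
        have h4 := (((tendsto_const_nhds (x := (m*m) • T)).sub h1).sub h2).add h3
        rw [hR1infdef]
        exact h4.congr fun n => by simp only [hR1def]
      have hR1infb : ‖R1inf‖ ≤ (m:ℝ)*K + 12*((m:ℝ)*(m:ℝ))*ε := by
        have hF1b : ‖F1 - m • c‖ ≤ (m:ℝ) * ε := by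
          have hdiff : F1 - m • c = ∑ r, (Φ (v1 r) - c) := by
            rw [hF1def, Finset.sum_sub_distrib, Finset.sum_const, Finset.card_univ,
              Fintype.card_fin]
          rw [hdiff]
          exact HA.sum_norm_le_card _ ε (fun r => hv1I r)
        have hGYb1 := hGYb v1 hv1I hv1J
        rw [← hGY1def] at hGYb1
        have hid2 : R1inf = (2*m) • (m • c - F1) + (2*m) • (m • (star c) - star F1)
            + ((2:ℕ) • GY1 - (m*m) • T) := by
          rw [hR1infdef, hTdef]
          module
        have hn1 : ‖(2*m) • (m • c - F1)‖ ≤ 2*((m:ℝ)*((m:ℝ)*ε)) := by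
          rw [HA.norm_nsmul']
          rw [norm_sub_rev]
          push_cast
          nlinarith [hF1b, norm_nonneg (F1 - m • c)]
        have hn2 : ‖(2*m) • (m • (star c) - star F1)‖ ≤ 2*((m:ℝ)*((m:ℝ)*ε)) := by
          have : m • (star c) - star F1 = star (m • c - F1) := by
            rw [star_sub, star_nsmul]
          rw [this, HA.norm_nsmul', norm_star, norm_sub_rev]
          push_cast
          nlinarith [hF1b, norm_nonneg (F1 - m • c)]
        rw [hid2]
        have t1 := norm_add_le ((2*m) • (m • c - F1) + (2*m) • (m • (star c) - star F1))
          ((2:ℕ) • GY1 - (m*m) • T)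
        have t2 := norm_add_le ((2*m) • (m • c - F1)) ((2*m) • (m • (star c) - star F1))
        nlinarith [hGYb1]
      have hmm2ε : (0:ℝ) < ((m:ℝ)*(m:ℝ))*ε := by nlinarith
      obtain ⟨N₁, hN₁⟩ := Metric.tendsto_atTop.mp hR1lim (((m:ℝ)*(m:ℝ))*ε) hmm2ε
      have hR1b : ∀ n ≥ N₁, ‖R1 n‖ ≤ (m:ℝ)*K + 13*((m:ℝ)*(m:ℝ))*ε := by
        intro n hn
        have h := hN₁ n hn
        rw [dist_eq_norm] at h
        have hre : R1inf + (R1 n - R1inf) = R1 n := by abel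
        calc ‖R1 n‖ = ‖R1inf + (R1 n - R1inf)‖ := by rw [hre]
          _ ≤ ‖R1inf‖ + ‖R1 n - R1inf‖ := norm_add_le _ _
          _ ≤ ((m:ℝ)*K + 12*((m:ℝ)*(m:ℝ))*ε) + ((m:ℝ)*(m:ℝ))*ε := by
              have := h.le
              linarith
          _ = (m:ℝ)*K + 13*((m:ℝ)*(m:ℝ))*ε := by ring
      -- MI-2 : per-n chains
      have hR2 : ∀ n : ℕ, ∃ R2 : A, ((2:ℕ) • ((m*m) • S n) - (m*m) • T ≤ R2) ∧
          ‖R2‖ ≤ (m:ℝ)*K + 12*((m:ℝ)*(m:ℝ))*ε := by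
        intro n
        obtain ⟨v2, hv2U, hv2J⟩ := HA.chain l ({i | ‖Φ i - c‖ ≤ ε} ∩ {i | ‖An i n - S n‖ ≤ ε})
          (Filter.inter_mem hIev (hGev n)) (fun j => {i | ‖g i j - Φ j‖ ≤ ε}) hJev m
        have hv2I : ∀ r, ‖Φ (v2 r) - c‖ ≤ ε := fun r => (hv2U r).1
        have hv2G : ∀ r, ‖An (v2 r) n - S n‖ ≤ ε := fun r => (hv2U r).2
        set Y2 : ℕ → A := fun k => ∑ r, x (v2 r) k with hY2def
        set GY2 : A := ∑ p ∈ (Finset.univ ×ˢ Finset.univ : Finset (Fin m × Fin m)),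
          g (v2 p.1) (v2 p.2) with hGY2def
        set Dn : A := ∑ k ∈ Finset.range n, star (Y2 k) * b k with hDndef
        have hDnId : Dn = ∑ r, An (v2 r) n := by
          simp only [hDndef, hY2def, hAdef]
          have e : ∀ k, star (∑ r, x (v2 r) k) * b k = ∑ r, star (x (v2 r) k) * b k := by
            intro k; rw [star_sum, Finset.sum_mul]
          rw [Finset.sum_congr rfl fun k _ => e k, Finset.sum_comm]
        have hsDn : star Dn = ∑ k ∈ Finset.range n, star (b k) * Y2 k := by
          simp only [hDndef]
          rw [star_sum]
          exact Finset.sum_congr rfl fun k _ => by simp [star_mul]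
        set Pb : ℕ → A := fun k => if k < n then b k else 0 with hPbdef
        have hres : ∀ (w : ℕ → A) (M : ℕ), n ≤ M →
            ∑ k ∈ Finset.range M, star (w k) * Pb k
              = ∑ k ∈ Finset.range n, star (w k) * b k := by
          intro w M hM
          rw [← Finset.sum_subset (Finset.range_subset_range.mpr hM) (fun k _ hk => ?_)]
          · exact Finset.sum_congr rfl fun k hk => by
              rw [hPbdef]; simp only; rw [if_pos (Finset.mem_range.mp hk)]
          · have : ¬ k < n := by simpa [Finset.mem_range] using hk
            rw [hPbdef]; simp [this]
        have hres' : ∀ (w : ℕ → A) (M : ℕ), n ≤ M →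
            ∑ k ∈ Finset.range M, star (Pb k) * w k
              = ∑ k ∈ Finset.range n, star (b k) * w k := by
          intro w M hM
          rw [← Finset.sum_subset (Finset.range_subset_range.mpr hM) (fun k _ hk => ?_)]
          · exact Finset.sum_congr rfl fun k hk => by
              rw [hPbdef]; simp only; rw [if_pos (Finset.mem_range.mp hk)]
          · have : ¬ k < n := by simpa [Finset.mem_range] using hk
            rw [hPbdef]; simp [this]
        have hα : m • Dn + m • star Dn - (m*m) • S n ≤ GY2 := by
          have hq := HA.qy x g hglim m v2
          rw [← hGY2def] at hq
          have hq' : Tendsto (fun M => ∑ k ∈ Finset.range M, star (Y2 k) * Y2 k)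
              atTop (𝓝 GY2) := by
            refine hq.congr fun M => ?_
            simp only [hY2def]
          refine ge_of_tendsto hq' (eventually_atTop.mpr ⟨n, fun M hM => ?_⟩)
          have h := HA.key_pos Y2 (fun k => m • Pb k) (Finset.range M)
          have eA : ∑ k ∈ Finset.range M, star (Y2 k) * (m • Pb k) = m • Dn := by
            have e : ∀ k, star (Y2 k) * (m • Pb k) = m • (star (Y2 k) * Pb k) :=
              fun k => mul_smul_comm _ _ _
            rw [Finset.sum_congr rfl fun k _ => e k, ← Finset.smul_sum, hres Y2 M hM,
              ← hDndef]
          have eB : ∑ k ∈ Finset.range M, star (m • Pb k) * Y2 k = m • star Dn := by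
            have e : ∀ k, star (m • Pb k) * Y2 k = m • (star (Pb k) * Y2 k) := by
              intro k; rw [star_nsmul, smul_mul_assoc]
            rw [Finset.sum_congr rfl fun k _ => e k, ← Finset.smul_sum, hres' Y2 M hM,
              ← hsDn]
          have eC : ∑ k ∈ Finset.range M, star (m • Pb k) * (m • Pb k) = (m*m) • S n := by
            have e : ∀ k, star (m • Pb k) * (m • Pb k) = (m*m) • (star (Pb k) * Pb k) := by
              intro k; rw [star_nsmul, smul_mul_assoc, mul_smul_comm, smul_smul]
            rw [Finset.sum_congr rfl fun k _ => e k, ← Finset.smul_sum, hres' Pb M hM]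
            have : ∑ k ∈ Finset.range n, star (b k) * Pb k
                = ∑ k ∈ Finset.range n, star (b k) * b k := by
              exact Finset.sum_congr rfl fun k hk => by
                rw [hPbdef]; simp only; rw [if_pos (Finset.mem_range.mp hk)]
            rw [this]
            simp only [hSdef]
          rw [eA, eB, eC] at h
          exact h
        refine ⟨(2:ℕ) • ((m*m) • S n - m • Dn) + (2:ℕ) • ((m*m) • S n - m • star Dn)
          + ((2:ℕ) • GY2 - (m*m) • T), ?_, ?_⟩
        · have h2α := nsmul_le_nsmul_right hα 2
          have hidd : ((2:ℕ) • ((m*m) • S n - m • Dn) + (2:ℕ) • ((m*m) • S n - m • star Dn)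
              + ((2:ℕ) • GY2 - (m*m) • T)) - ((2:ℕ) • ((m*m) • S n) - (m*m) • T)
              = (2:ℕ) • GY2 - (2:ℕ) • (m • Dn + m • star Dn - (m*m) • S n) := by
            module
          have h0 := sub_nonneg.mpr h2α
          rw [← hidd] at h0
          exact sub_nonneg.mp h0
        · have hDnb : ‖(m:ℕ) • S n - Dn‖ ≤ (m:ℝ) * ε := by
            have e : (m:ℕ) • S n - Dn = ∑ r, (S n - An (v2 r) n) := by
              rw [hDnId, Finset.sum_sub_distrib, Finset.sum_const, Finset.card_univ,
                Fintype.card_fin]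
            rw [e]
            exact HA.sum_norm_le_card _ ε (fun r => by rw [norm_sub_rev]; exact hv2G r)
          have hDnb' : ‖(m:ℕ) • S n - star Dn‖ ≤ (m:ℝ) * ε := by
            have e : (m:ℕ) • S n - star Dn = star ((m:ℕ) • S n - Dn) := by
              rw [star_sub, star_nsmul, hSsa n]
            rw [e, norm_star]
            exact hDnb
          have hGYb2 := hGYb v2 hv2I hv2J
          rw [← hGY2def] at hGYb2
          have t1 : ‖(2:ℕ) • ((m*m) • S n - m • Dn)‖ ≤ 2*((m:ℝ)*((m:ℝ)*ε)) := by
            have e : (m*m) • S n - m • Dn = m • ((m:ℕ) • S n - Dn) := by module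
            rw [e, HA.norm_nsmul', HA.norm_nsmul']
            push_cast
            nlinarith [hDnb, norm_nonneg ((m:ℕ) • S n - Dn), hm1R]
          have t2 : ‖(2:ℕ) • ((m*m) • S n - m • star Dn)‖ ≤ 2*((m:ℝ)*((m:ℝ)*ε)) := by
            have e : (m*m) • S n - m • star Dn = m • ((m:ℕ) • S n - star Dn) := by module
            rw [e, HA.norm_nsmul', HA.norm_nsmul']
            push_cast
            nlinarith [hDnb', norm_nonneg ((m:ℕ) • S n - star Dn), hm1R]
          have u1 := norm_add_le ((2:ℕ) • ((m*m) • S n - m • Dn)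
            + (2:ℕ) • ((m*m) • S n - m • star Dn)) ((2:ℕ) • GY2 - (m*m) • T)
          have u2 := norm_add_le ((2:ℕ) • ((m*m) • S n - m • Dn))
            ((2:ℕ) • ((m*m) • S n - m • star Dn))
          nlinarith [hGYb2]
      -- final assembly
      refine ⟨N₁, fun n hn => ?_⟩
      obtain ⟨R2, hR2le, hR2b⟩ := hR2 n
      set d : A := (m*m) • T - (2:ℕ) • ((m*m) • S n) with hddef
      have hdneg : -d ≤ R2 := by
        rw [hddef, neg_sub]
        exact hR2le
      have h0 : 0 ≤ d + R2 := by
        have := add_le_add_right hdneg d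
        simpa using this
      have h1 : d + R2 ≤ R1 n + R2 := add_le_add_left (hIneq1 n) R2
      have h2 : ‖d + R2‖ ≤ ‖R1 n + R2‖ := CStarAlgebra.norm_le_norm_of_nonneg_of_le h0 h1
      have h3 : ‖d‖ ≤ ‖R1 n‖ + 2*‖R2‖ := by
        have hre : (d + R2) - R2 = d := by abel
        calc ‖d‖ = ‖(d + R2) - R2‖ := by rw [hre]
          _ ≤ ‖d + R2‖ + ‖R2‖ := norm_sub_le _ _
          _ ≤ ‖R1 n + R2‖ + ‖R2‖ := by linarith
          _ ≤ (‖R1 n‖ + ‖R2‖) + ‖R2‖ := by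
              have := norm_add_le (R1 n) R2
              linarith
          _ = ‖R1 n‖ + 2*‖R2‖ := by ring
      have h4 : ‖d‖ ≤ 3*((m:ℝ)*K) + 37*((m:ℝ)*(m:ℝ))*ε := by
        have := hR1b n hn
        linarith
      have hdz : d = (m*m) • (T - (2:ℕ) • S n) := by
        rw [hddef]
        module
      have h5 : ((m:ℝ)*(m:ℝ)) * ‖T - (2:ℕ) • S n‖ ≤ 3*((m:ℝ)*K) + 37*((m:ℝ)*(m:ℝ))*ε := by
        have := HA.norm_nsmul' (m*m) (T - (2:ℕ) • S n)
        rw [hdz] at h4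
        rw [this] at h4
        push_cast at h4
        linarith
      rw [norm_sub_rev]
      have hq : (0:ℝ) < (m:ℝ)*(m:ℝ) := by nlinarith
      rw [hεdef] at h5
      nlinarith [norm_nonneg (T - (2:ℕ) • S n)]
    -- conclude
    have conv2 : Tendsto (fun n => (2:ℕ) • S n) atTop (𝓝 T) := by
      rw [Metric.tendsto_atTop]
      intro ε₀ hε₀
      obtain ⟨N, hN⟩ := key ε₀ hε₀
      refine ⟨N, fun n hn => ?_⟩
      rw [dist_eq_norm]
      calc ‖(2:ℕ) • S n - T‖ ≤ (9/10) * ε₀ := hN n hn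
        _ < ε₀ := by linarith
    refine ⟨(2:ℂ)⁻¹ • T, ?_⟩
    have h5 := conv2.const_smul ((2:ℂ)⁻¹)
    refine (h5.congr fun n => ?_ : Tendsto S atTop (𝓝 ((2:ℂ)⁻¹ • T)))
    rw [← Nat.cast_smul_eq_nsmul ℂ, smul_smul]
    norm_num
  refine ⟨main, ?_⟩
  obtain ⟨s, hs⟩ := main
  have h2 := hlim b ⟨s, hs⟩
  have h3 := h2.star
  have e1 : ∀ w : ℕ → A, star (∑' k, star (w k) * b k) = ∑' k, star (b k) * w k := by
    intro w
    rw [tsum_star]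
    exact tsum_congr fun k => by simp [star_mul]
  have h4 : Tendsto (fun i => ∑' k, star (b k) * x i k)
      l (𝓝 (star (∑' k, star (b k) * b k))) := h3.congr fun i => e1 (x i)
  rwa [e1 b] at h4
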